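/- For any s > 0, integer k ≥ 0, and δ ∈ (0,1), if n is an integer with n ≥ 2(k² + s²)/δ (and n large enough that s/n < 1 and sk/n ≤ 1/2), then |P_s(k) - Pr[X_n = k]| ≤ δ/2, where X_n is binomial with parameters n and s/n. -/

import Mathlib

open Finset

lemma weier (k : ℕ) (f : ℕ → ℝ) (h0 : ∀ i ∈ range k, 0 ≤ f i)
    (h1 : ∀ i ∈ range k, f i ≤ 1) :
    1 - ∑ i ∈ range k, f i ≤ ∏ i ∈ range k, (1 - f i) := by
  induction k with
  | zero => simp
  | succ k ih =>
    have hmem : ∀ i ∈ range k, i ∈ range (k+1) := fun i hi =>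
      mem_range.2 (Nat.lt_succ_of_lt (mem_range.1 hi))
    have hp := ih (fun i hi => h0 i (hmem i hi)) (fun i hi => h1 i (hmem i hi))
    have hs0 : 0 ≤ ∑ i ∈ range k, f i := Finset.sum_nonneg fun i hi => h0 i (hmem i hi)
    have hk0 : 0 ≤ f k := h0 k (self_mem_range_succ k)
    have hk1 : f k ≤ 1 := h1 k (self_mem_range_succ k)
    rw [Finset.sum_range_succ, Finset.prod_range_succ]
    nlinarith [mul_le_mul_of_nonneg_right hp (by linarith : (0:ℝ) ≤ 1 - f k),
      mul_nonneg hs0 hk0]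

lemma gauss_sum (k : ℕ) : ∑ i ∈ range k, (i : ℝ) = k * (k - 1) / 2 := by
  induction k with
  | zero => simp
  | succ m ih => rw [Finset.sum_range_succ, ih]; push_cast; ring

/-- The Poisson probability mass function with parameter `s`. -/
noncomputable def poissonPMF (s : ℝ) (k : ℕ) : ℝ := Real.exp (-s) * s ^ k / (Nat.factorial k)

/-- The binomial probability mass function: probability that a binomial random
variable with parameters `n` and `p` equals `k`. -/
noncomputable def binomPMF (n : ℕ) (p : ℝ) (k : ℕ) : ℝ :=
  (n.choose k) * p ^ k * (1 - p) ^ (n - k)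

set_option maxHeartbeats 4000000 in
theorem binomial_poisson_additive_error (s delta : ℝ) (k n : ℕ)
    (hs : 0 < s) (hdelta : 0 < delta) (hdelta1 : delta < 1)
    (hn : 2 * ((k : ℝ) ^ 2 + s ^ 2) / delta ≤ n)
    (hsn : s / n < 1) (hskn : s * k / n ≤ 1 / 2) :
    |poissonPMF s k - binomPMF n (s / n) k| ≤ delta / 2 := by
  have hq : (0:ℝ) < (k : ℝ) ^ 2 + s ^ 2 := by positivity
  have hN : (0:ℝ) < n := lt_of_lt_of_le (by positivity) hn
  set N : ℝ := (n : ℝ) with hNdef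
  have hnδ : 2 * ((k : ℝ) ^ 2 + s ^ 2) ≤ delta * N := by
    rw [div_le_iff₀ hdelta] at hn; linarith
  have hnbig : 2 * ((k : ℝ) ^ 2 + s ^ 2) ≤ N := by nlinarith
  have hkn : k ≤ n := by
    by_contra h
    push_neg at h
    have h2 : (n:ℝ) < (k:ℝ) := by exact_mod_cast h
    have h1 : (1:ℝ) ≤ (k:ℝ) := by
      have : 1 ≤ k := Nat.one_le_iff_ne_zero.2 (by omega)
      exact_mod_cast this
    nlinarith [sq_nonneg s, sq_nonneg ((k:ℝ) - 1)]
  have hkN : (k:ℝ) ≤ N := by rw [hNdef]; exact_mod_cast hkn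
  set p : ℝ := s / N with hpdef
  have hp0 : 0 < p := div_pos hs hN
  have hp1 : p < 1 := hsn
  have h1p : (0:ℝ) ≤ 1 - p := by linarith
  -- key combinatorial identity
  have e2 : k.factorial * n.choose k = ∏ i ∈ range k, (n - i) :=
    (Nat.descFactorial_eq_factorial_mul_choose n k).symm.trans
      (Nat.descFactorial_eq_prod_range n k)
  have hcast : (Nat.factorial k : ℝ) * (n.choose k : ℝ) = ∏ i ∈ range k, (N - i) := by
    have e1 : ((∏ i ∈ range k, (n - i) : ℕ) : ℝ) = ∏ i ∈ range k, (N - i) := by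
      rw [Nat.cast_prod]
      refine Finset.prod_congr rfl fun i hi => ?_
      have hin : i ≤ n := le_of_lt (lt_of_lt_of_le (mem_range.1 hi) hkn)
      rw [Nat.cast_sub hin]
    have : ((k.factorial * n.choose k : ℕ) : ℝ) = ∏ i ∈ range k, (N - i) := by
      rw [e2]; exact e1
    push_cast at this
    exact this
  have hfac : (0:ℝ) < (Nat.factorial k : ℝ) := by exact_mod_cast k.factorial_pos
  have key : (n.choose k : ℝ) * p ^ k
      = s ^ k / (Nat.factorial k) * ∏ i ∈ range k, (1 - (i:ℝ)/N) := by
    have hprod : ∏ i ∈ range k, (1 - (i:ℝ)/N) = (∏ i ∈ range k, (N - i)) / N ^ k := by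
      calc ∏ i ∈ range k, (1 - (i:ℝ)/N) = ∏ i ∈ range k, ((N - i)/N) := by
            refine Finset.prod_congr rfl fun i hi => ?_
            field_simp
        _ = (∏ i ∈ range k, (N - (i:ℝ))) / ∏ _i ∈ range k, N := Finset.prod_div_distrib _ _
        _ = (∏ i ∈ range k, (N - (i:ℝ))) / N ^ k := by rw [Finset.prod_const, card_range]
    rw [hprod, ← hcast, hpdef, div_pow]
    field_simp
  -- product bounds
  have hfrange : ∀ i ∈ range k, 0 ≤ (i:ℝ)/N ∧ (i:ℝ)/N ≤ 1 := by
    intro i hi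
    refine ⟨by positivity, ?_⟩
    rw [div_le_one hN]
    exact le_trans (by exact_mod_cast le_of_lt (mem_range.1 hi)) hkN
  have hProd0 : 0 ≤ ∏ i ∈ range k, (1 - (i:ℝ)/N) :=
    Finset.prod_nonneg fun i hi => by linarith [(hfrange i hi).2]
  have hProd1 : ∏ i ∈ range k, (1 - (i:ℝ)/N) ≤ 1 :=
    Finset.prod_le_one (fun i hi => by linarith [(hfrange i hi).2])
      (fun i hi => by linarith [(hfrange i hi).1])
  have hsum : ∑ i ∈ range k, (i:ℝ)/N ≤ (k:ℝ)^2 / (2*N) := by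
    rw [← Finset.sum_div, gauss_sum, div_le_div_iff₀ hN (by positivity)]
    nlinarith [Nat.cast_nonneg (α := ℝ) k, hN.le,
      mul_nonneg (Nat.cast_nonneg (α := ℝ) k) hN.le]
  have hProdlb : 1 - (k:ℝ)^2/(2*N) ≤ ∏ i ∈ range k, (1 - (i:ℝ)/N) :=
    le_trans (by linarith [hsum]) (weier k _ (fun i hi => (hfrange i hi).1)
      (fun i hi => (hfrange i hi).2))
  -- Poisson bounds
  have hPdef : poissonPMF s k = Real.exp (-s) * (s ^ k / Nat.factorial k) := by
    rw [poissonPMF]; ring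
  have hP0 : 0 ≤ poissonPMF s k := by rw [poissonPMF]; positivity
  have hP1 : poissonPMF s k ≤ 1 := by
    rw [hPdef, Real.exp_neg, inv_mul_le_iff₀ (Real.exp_pos s), mul_one]
    exact Real.pow_div_factorial_le_exp _ hs.le k
  -- bounds on (1-p)^(n-k)
  have h3 : p * ((n - k : ℕ) : ℝ) = s - s * (k:ℝ) / N := by
    rw [Nat.cast_sub hkn, hpdef]
    field_simp
    ring
  have hBub : (1 - p) ^ (n - k) ≤ Real.exp (-s) * Real.exp (s * k / N) := by
    calc (1 - p) ^ (n - k) ≤ (Real.exp (-p)) ^ (n - k) := by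
          apply pow_le_pow_left₀ h1p
          linarith [Real.add_one_le_exp (-p)]
      _ = Real.exp (((n - k : ℕ) : ℝ) * (-p)) := (Real.exp_nat_mul _ _).symm
      _ = Real.exp (-s + s * k / N) := by
          rw [show ((n - k : ℕ) : ℝ) * (-p) = -(p * ((n - k : ℕ) : ℝ)) from by ring, h3]
          ring_nf
      _ = Real.exp (-s) * Real.exp (s * k / N) := Real.exp_add _ _
  have hBlb : Real.exp (-s) * (1 - s^2/N) ≤ (1 - p) ^ (n - k) := by
    have step1 : (1 - p) ^ n ≤ (1 - p) ^ (n - k) :=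
      pow_le_pow_of_le_one h1p (by linarith) (Nat.sub_le n k)
    have hbase : Real.exp (-p) * (1 - p^2) ≤ 1 - p := by
      rw [Real.exp_neg, inv_mul_le_iff₀ (Real.exp_pos p)]
      nlinarith [mul_le_mul_of_nonneg_left (Real.add_one_le_exp p) h1p]
    have hbase0 : 0 ≤ Real.exp (-p) * (1 - p^2) :=
      mul_nonneg (Real.exp_pos _).le (by nlinarith)
    have step2 : (Real.exp (-p) * (1 - p^2)) ^ n ≤ (1 - p) ^ n :=
      pow_le_pow_left₀ hbase0 hbase n
    have step3 : (Real.exp (-p) * (1 - p^2)) ^ n = Real.exp (-s) * (1 - p^2) ^ n := by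
      rw [mul_pow, ← Real.exp_nat_mul]
      congr 2
      rw [hpdef]
      field_simp
      simp only [hNdef]
    have hnp : (n:ℝ) * p^2 = s^2/N := by
      rw [hpdef, div_pow]
      field_simp
      ring
    have step4 : 1 - s^2/N ≤ (1 - p^2) ^ n := by
      have hber := one_add_mul_le_pow (a := -p^2) (by nlinarith) n
      calc 1 - s^2/N = 1 + (n:ℝ) * (-p^2) := by rw [← hnp]; ring
        _ ≤ (1 + -p^2)^n := hber
        _ = (1 - p^2)^n := by rw [show (1:ℝ) + -p^2 = 1 - p^2 from by ring]
    calc Real.exp (-s) * (1 - s^2/N) ≤ Real.exp (-s) * (1 - p^2)^n :=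
          mul_le_mul_of_nonneg_left step4 (Real.exp_pos _).le
      _ = (Real.exp (-p) * (1 - p^2)) ^ n := step3.symm
      _ ≤ (1 - p)^n := step2
      _ ≤ (1 - p)^(n-k) := step1
  -- exp(x) ≤ 1 + 2x for x in [0,1/2]
  have hsk : 0 ≤ s * (k:ℝ) / N := by positivity
  have hexp2x : Real.exp (s * k / N) ≤ 1 + 2 * (s * k / N) := by
    set x := s * (k:ℝ) / N with hxdef
    have hmul : Real.exp x * Real.exp (-x) = 1 := by
      rw [← Real.exp_add]; simp
    have h1 : Real.exp x * (1 - x) ≤ 1 := by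
      calc Real.exp x * (1 - x) ≤ Real.exp x * Real.exp (-x) :=
            mul_le_mul_of_nonneg_left (by linarith [Real.add_one_le_exp (-x)])
              (Real.exp_pos x).le
        _ = 1 := hmul
    nlinarith [h1, Real.exp_pos x, mul_nonneg hsk (by linarith : (0:ℝ) ≤ 1 - 2*x)]
  have hBpos : 0 ≤ (1 - p) ^ (n - k) := pow_nonneg h1p _
  have hskfac : 0 ≤ s ^ k / (Nat.factorial k : ℝ) := by positivity
  -- upper bound
  have hub : binomPMF n p k - poissonPMF s k ≤ ((k:ℝ)^2 + s^2) / N := by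
    have h1 : binomPMF n p k ≤ poissonPMF s k * Real.exp (s * k / N) := by
      rw [binomPMF, key, hPdef]
      calc s ^ k / (Nat.factorial k : ℝ) * (∏ i ∈ range k, (1 - (i:ℝ)/N)) * (1 - p) ^ (n - k)
          ≤ s ^ k / (Nat.factorial k : ℝ) * 1 * (Real.exp (-s) * Real.exp (s * k / N)) := by
            apply mul_le_mul (mul_le_mul_of_nonneg_left hProd1 hskfac) hBub hBpos
            rw [mul_one]; exact hskfac
        _ = Real.exp (-s) * (s ^ k / Nat.factorial k) * Real.exp (s * k / N) := by ring
    have h2 : poissonPMF s k * Real.exp (s * k / N) ≤ poissonPMF s k * (1 + 2 * (s * k / N)) :=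
      mul_le_mul_of_nonneg_left hexp2x hP0
    have h4 : poissonPMF s k * (2 * (s * k / N)) ≤ 2 * (s * k / N) :=
      mul_le_of_le_one_left (by positivity) hP1
    have h5 : 2 * (s * (k:ℝ) / N) ≤ ((k:ℝ)^2 + s^2) / N := by
      rw [show 2 * (s * (k:ℝ) / N) = (2 * (s * k)) / N from by ring]
      gcongr
      nlinarith [sq_nonneg (s - (k:ℝ))]
    nlinarith [h1, h2, h4, h5]
  -- lower bound
  have ha : (k:ℝ)^2/(2*N) ≤ 1/4 := by
    rw [div_le_div_iff₀ (by positivity) (by norm_num)]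
    nlinarith
  have hb : s^2/N ≤ 1/2 := by
    rw [div_le_div_iff₀ hN (by norm_num)]
    nlinarith
  have hlb : poissonPMF s k - binomPMF n p k ≤ ((k:ℝ)^2 + s^2) / N := by
    have h1 : poissonPMF s k * ((1 - (k:ℝ)^2/(2*N)) * (1 - s^2/N)) ≤ binomPMF n p k := by
      rw [binomPMF, key, hPdef]
      rw [show Real.exp (-s) * (s ^ k / (Nat.factorial k : ℝ)) * ((1 - (k:ℝ)^2/(2*N)) * (1 - s^2/N))
          = s ^ k / (Nat.factorial k : ℝ) * (1 - (k:ℝ)^2/(2*N)) * (Real.exp (-s) * (1 - s^2/N))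
          from by ring]
      apply mul_le_mul (mul_le_mul_of_nonneg_left hProdlb hskfac) hBlb
      · exact mul_nonneg (Real.exp_pos _).le (by linarith [hb])
      · exact mul_nonneg hskfac hProd0
    have hab : 0 ≤ ((k:ℝ)^2/(2*N)) * (s^2/N) := by positivity
    have ha0 : 0 ≤ (k:ℝ)^2/(2*N) := by positivity
    have hb0 : 0 ≤ s^2/N := by positivity
    have hq2 : 0 ≤ (k:ℝ)^2/(2*N) + s^2/N - ((k:ℝ)^2/(2*N)) * (s^2/N) := by
      nlinarith [mul_nonneg ha0 (by linarith [hb] : (0:ℝ) ≤ 1 - s^2/N)]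
    have h3' : poissonPMF s k * ((k:ℝ)^2/(2*N) + s^2/N - ((k:ℝ)^2/(2*N)) * (s^2/N))
        ≤ (k:ℝ)^2/(2*N) + s^2/N - ((k:ℝ)^2/(2*N)) * (s^2/N) :=
      mul_le_of_le_one_left hq2 hP1
    have h4 : (k:ℝ)^2/(2*N) + s^2/N ≤ ((k:ℝ)^2 + s^2)/N := by
      rw [show (k:ℝ)^2/(2*N) + s^2/N = ((k:ℝ)^2/2 + s^2)/N from by field_simp]
      gcongr
      nlinarith [sq_nonneg (k:ℝ)]
    nlinarith [h1, h3', h4, hab]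
  have hfin : ((k:ℝ)^2 + s^2) / N ≤ delta / 2 := by
    rw [div_le_div_iff₀ hN (by norm_num)]
    linarith [hnδ]
  rw [abs_le]
  constructor
  · linarith [hub, hfin]
  · linarith [hlb, hfin]
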